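/- For all a, b > 0 with a ≠ b, the Neuman–Sándor mean satisfies M(a,b) > C(a,b)^(1/6) · A(a,b)^(5/6). -/

import Mathlib

open Real Set

noncomputable def NSmean (a b : ℝ) : ℝ := (a - b) / (2 * Real.arsinh ((a - b) / (a + b)))
noncomputable def Amean (a b : ℝ) : ℝ := (a + b) / 2
noncomputable def Cmean (a b : ℝ) : ℝ := (a ^ 2 + b ^ 2) / (a + b)


lemma hasDerivAt_g (x : ℝ) :
    HasDerivAt (fun x : ℝ => x * (1 + x ^ 2) ^ (-(1:ℝ)/6) - Real.arsinh x)
      ((1 + x ^ 2) ^ (-(1:ℝ)/6) + x * ((2 * x) * (-(1:ℝ)/6) * (1 + x ^ 2) ^ (-(1:ℝ)/6 - 1))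
        - (Real.sqrt (1 + x ^ 2))⁻¹) x := by
  have hu : (0:ℝ) < 1 + x ^ 2 := by positivity
  have h1 : HasDerivAt (fun x : ℝ => 1 + x ^ 2) (2 * x) x := by
    simpa using (hasDerivAt_pow 2 x).const_add 1
  have h2 := h1.rpow_const (p := -(1:ℝ)/6) (Or.inl hu.ne')
  have h3 := (hasDerivAt_id x).fun_mul h2
  simpa [one_mul] using h3.fun_sub (Real.hasDerivAt_arsinh x)

lemma deriv_pos {x : ℝ} (hx : 0 < x) :
    0 < (1 + x ^ 2) ^ (-(1:ℝ)/6) + x * ((2 * x) * (-(1:ℝ)/6) * (1 + x ^ 2) ^ (-(1:ℝ)/6 - 1))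
        - (Real.sqrt (1 + x ^ 2))⁻¹ := by
  have hu : (0:ℝ) < 1 + x ^ 2 := by positivity
  set u := 1 + x ^ 2 with hudef
  have hsqrt : (Real.sqrt u)⁻¹ = u ^ (-(1:ℝ)/2) := by
    rw [Real.sqrt_eq_rpow, ← Real.rpow_neg hu.le]; norm_num
  have hc : u ^ ((2:ℝ)/3) < 1 + 2 * x ^ 2 / 3 := by
    have hcpos : (0:ℝ) < 1 + 2 * x ^ 2 / 3 := by positivity
    have hpow : (u ^ ((2:ℝ)/3)) ^ (3:ℕ) = u ^ (2:ℕ) := by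
      rw [← Real.rpow_natCast (u ^ ((2:ℝ)/3)) 3, ← Real.rpow_mul hu.le]
      norm_num
    refine lt_of_pow_lt_pow_left₀ 3 hcpos.le ?_
    rw [hpow]
    nlinarith [sq_nonneg x, pow_pos hx 2, pow_pos hx 4, pow_pos hx 6]
  -- rewrite main expression
  have key : u ^ (-(1:ℝ)/6) + x * ((2 * x) * (-(1:ℝ)/6) * u ^ (-(1:ℝ)/6 - 1))
      = (1 + 2 * x ^ 2 / 3) * u ^ (-(7:ℝ)/6) := by
    have h16 : u ^ (-(1:ℝ)/6) = u * u ^ (-(7:ℝ)/6) := by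
      rw [show (-(1:ℝ)/6) = 1 + (-(7:ℝ)/6) by norm_num, Real.rpow_add hu, Real.rpow_one]
    have h76 : (-(1:ℝ)/6 - 1) = -(7:ℝ)/6 := by norm_num
    rw [h16, h76]
    ring
  rw [key, hsqrt]
  have hsplit : u ^ (-(1:ℝ)/2) = u ^ ((2:ℝ)/3) * u ^ (-(7:ℝ)/6) := by
    rw [← Real.rpow_add hu]; norm_num
  rw [hsplit]
  have h76 : (0:ℝ) < u ^ (-(7:ℝ)/6) := Real.rpow_pos_of_pos hu _
  nlinarith [mul_lt_mul_of_pos_right hc h76]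

lemma key_ineq {t : ℝ} (ht : 0 < t) : Real.arsinh t < t * (1 + t ^ 2) ^ (-(1:ℝ)/6) := by
  set g : ℝ → ℝ := fun x => x * (1 + x ^ 2) ^ (-(1:ℝ)/6) - Real.arsinh x with hg
  have hdiff : Differentiable ℝ g := fun x => (hasDerivAt_g x).differentiableAt
  have hmono : StrictMonoOn g (Set.Ici 0) := by
    refine strictMonoOn_of_deriv_pos (convex_Ici 0) hdiff.continuous.continuousOn ?_
    intro x hx
    rw [interior_Ici] at hx
    rw [(hasDerivAt_g x).deriv]
    exact deriv_pos hx
  have h0 : g 0 = 0 := by simp [hg]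
  have := hmono (Set.self_mem_Ici) (Set.mem_Ici.mpr ht.le) ht
  rw [h0] at this
  simpa [hg, sub_pos] using this

lemma aux_main {a b : ℝ} (hb : 0 < b) (hab : b < a) :
    Cmean a b ^ ((1 : ℝ) / 6) * Amean a b ^ ((5 : ℝ) / 6) < NSmean a b := by
  have hs : (0:ℝ) < a + b := by linarith
  set t : ℝ := (a - b) / (a + b) with htdef
  have ht : 0 < t := div_pos (by linarith) hs
  set A : ℝ := (a + b) / 2 with hAdef
  have hA : 0 < A := by positivity
  have harsinh : 0 < Real.arsinh t := Real.arsinh_pos_iff.mpr ht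
  have hCval : Cmean a b = A * (1 + t ^ 2) := by
    rw [Cmean, hAdef, htdef]
    field_simp
    ring
  have hNval : NSmean a b = A * t / Real.arsinh t := by
    rw [NSmean, hAdef, htdef]
    have hab2 : a - b = (a + b) * ((a - b) / (a + b)) := by field_simp
    rw [show (a - b) / (2 * Real.arsinh ((a - b) / (a + b)))
        = ((a + b) * ((a - b) / (a + b))) / (2 * Real.arsinh ((a - b) / (a + b))) by rw [← hab2]]
    ring
  have hAmval : Amean a b = A := rfl
  rw [hCval, hNval, hAmval]
  have hu : (0:ℝ) < 1 + t ^ 2 := by positivity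
  have hLHS : (A * (1 + t ^ 2)) ^ ((1:ℝ)/6) * A ^ ((5:ℝ)/6)
      = A * (1 + t ^ 2) ^ ((1:ℝ)/6) := by
    rw [Real.mul_rpow hA.le hu.le]
    rw [mul_comm (A ^ ((1:ℝ)/6)) _, mul_assoc, ← Real.rpow_add hA]
    norm_num
    ring
  rw [hLHS]
  rw [lt_div_iff₀ harsinh]
  have h6 : (0:ℝ) < (1 + t ^ 2) ^ ((1:ℝ)/6) := Real.rpow_pos_of_pos hu _
  have := mul_lt_mul_of_pos_right (key_ineq ht) h6
  have hstep : (1 + t ^ 2) ^ ((1:ℝ)/6) * Real.arsinh t < t :=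
    calc (1 + t ^ 2) ^ ((1:ℝ)/6) * Real.arsinh t
      = Real.arsinh t * (1 + t ^ 2) ^ ((1:ℝ)/6) := by ring
    _ < t * (1 + t ^ 2) ^ (-(1:ℝ)/6) * (1 + t ^ 2) ^ ((1:ℝ)/6) := this
    _ = t := by
        rw [mul_assoc, ← Real.rpow_add hu]
        norm_num
  rw [mul_assoc]
  exact mul_lt_mul_of_pos_left hstep hA


lemma NS_symm (a b : ℝ) : NSmean b a = NSmean a b := by
  unfold NSmean
  rw [show b - a = -(a - b) by ring, show b + a = a + b by ring,
    show -(a - b) / (a + b) = -((a - b) / (a + b)) from neg_div _ _, Real.arsinh_neg,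
    mul_neg, neg_div, div_neg, neg_neg]

theorem stmt_0 (a b : ℝ) (ha : 0 < a) (hb : 0 < b) (hab : a ≠ b) :
    Cmean a b ^ ((1 : ℝ) / 6) * Amean a b ^ ((5 : ℝ) / 6) < NSmean a b := by
  rcases hab.lt_or_gt with h | h
  · have := aux_main ha h
    have hC : Cmean b a = Cmean a b := by
      unfold Cmean; rw [add_comm (b ^ 2), add_comm b a]
    have hA : Amean b a = Amean a b := by unfold Amean; rw [add_comm b a]
    rwa [hC, hA, NS_symm] at this
  · exact aux_main hb h
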